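/- On each leaf of the determinant foliation of the parameter space, every f-divergence between Poincaré distributions is symmetric: if θ₁ and θ₂ are real 2×2 symmetric positive-definite matrices with det θ₁ = det θ₂, then for every convex f : (0,∞) → ℝ with f(1) = 0 one has D_f[p_{θ₁} : p_{θ₂}] = D_f[p_{θ₂} : p_{θ₁}]. -/

import Mathlib

open MeasureTheory Matrix Complex

lemma det_restrict_aux (w : ℂ) :
    (((1 : ℂ →L[ℂ] ℂ).smulRight w).restrictScalars ℝ).det = Complex.normSq w := by
  have h : (((1 : ℂ →L[ℂ] ℂ).smulRight w).restrictScalars ℝ).toLinearMap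
      = Algebra.lmul ℝ ℂ w := by
    apply LinearMap.ext
    intro z
    simp [mul_comm]
  rw [ContinuousLinearMap.det, h, ← Algebra.norm_apply, Algebra.norm_complex_apply]

noncomputable def mob (α β γ δ : ℝ) (z : ℂ) : ℂ := ((α:ℂ)*z+β)/((γ:ℂ)*z+δ)

section Mob
variable (α β γ δ : ℝ)

lemma denom_ne (h1 : α*δ - β*γ = 1) {z : ℂ} (hz : 0 < z.im) : ((γ:ℂ)*z+δ) ≠ 0 := by
  intro h
  rcases eq_or_ne γ 0 with hγ | hγ
  · have hδ : δ ≠ 0 := by intro hδ; rw [hγ, hδ] at h1; simp at h1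
    rw [hγ] at h; simpa [hδ] using h
  · have := congrArg Complex.im h
    simp at this
    rcases this with h' | h'
    · exact hγ h'
    · exact absurd h' (ne_of_gt hz)

lemma mob_im (h1 : α*δ - β*γ = 1) {z : ℂ} (hz : 0 < z.im) :
    (mob α β γ δ z).im = z.im / Complex.normSq ((γ:ℂ)*z+δ) := by
  have hd : Complex.normSq ((γ:ℂ)*z+δ) ≠ 0 :=
    (Complex.normSq_pos.mpr (denom_ne α β γ δ h1 hz)).ne'
  rw [mob, Complex.div_im]
  simp only [Complex.add_im, Complex.add_re, Complex.mul_im, Complex.mul_re,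
    Complex.ofReal_re, Complex.ofReal_im]
  field_simp
  ring_nf
  nlinarith [h1, sq_nonneg z.re, sq_nonneg z.im]

lemma mob_inv (h1 : α*δ - β*γ = 1) {z : ℂ} (hz : 0 < z.im) :
    mob δ (-β) (-γ) α (mob α β γ δ z) = z := by
  have hden : ((γ:ℂ)*z+δ) ≠ 0 := denom_ne α β γ δ h1 hz
  have hc : ((α:ℂ)*δ - β*γ) = 1 := by exact_mod_cast congrArg (fun t : ℝ => (t:ℂ)) h1
  have h2 : (δ:ℂ)*((α:ℂ)*z+β) + (-β:ℝ)*((γ:ℂ)*z+δ) = z := by push_cast; linear_combination z*hc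
  have h3 : ((-γ:ℝ):ℂ)*((α:ℂ)*z+β) + (α:ℂ)*((γ:ℂ)*z+δ) = 1 := by push_cast; linear_combination hc
  have num : (δ:ℂ)*(mob α β γ δ z) + ((-β:ℝ):ℂ) = z/((γ:ℂ)*z+δ) := by
    rw [mob, eq_div_iff hden]; push_cast
    linear_combination (δ:ℂ) * div_mul_cancel₀ ((α:ℂ)*z+β) hden + z*hc
  have den : ((-γ:ℝ):ℂ)*(mob α β γ δ z) + ((α:ℝ):ℂ) = 1/((γ:ℂ)*z+δ) := by
    rw [mob, eq_div_iff hden]; push_cast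
    linear_combination (-(γ:ℂ)) * div_mul_cancel₀ ((α:ℂ)*z+β) hden + hc
  rw [mob, num, den]
  rw [one_div, div_inv_eq_mul, div_mul_cancel₀ z hden]

lemma mob_injOn (h1 : α*δ - β*γ = 1) :
    Set.InjOn (mob α β γ δ) {z : ℂ | 0 < z.im} := by
  intro z hz w hw h
  have := congrArg (mob δ (-β) (-γ) α) h
  rwa [mob_inv α β γ δ h1 hz, mob_inv α β γ δ h1 hw] at this

lemma mob_image (h1 : α*δ - β*γ = 1) :
    mob α β γ δ '' {z : ℂ | 0 < z.im} = {z : ℂ | 0 < z.im} := by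
  have h1' : δ*α - (-β)*(-γ) = 1 := by linarith [h1]
  ext w
  constructor
  · rintro ⟨z, hz, rfl⟩
    have := mob_im α β γ δ h1 hz
    simp only [Set.mem_setOf_eq] at hz ⊢
    rw [this]
    exact div_pos hz (Complex.normSq_pos.mpr (denom_ne α β γ δ h1 hz))
  · intro hw
    refine ⟨mob δ (-β) (-γ) α w, ?_, ?_⟩
    · have := mob_im δ (-β) (-γ) α h1' hw
      simp only [Set.mem_setOf_eq] at hw ⊢
      rw [this]
      exact div_pos hw (Complex.normSq_pos.mpr (denom_ne δ (-β) (-γ) α h1' hw))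
    · have := mob_inv δ (-β) (-γ) α h1' hw
      simpa using this

lemma mob_hasFDeriv (h1 : α*δ - β*γ = 1) {z : ℂ} (hz : 0 < z.im) :
    HasFDerivAt (mob α β γ δ)
      (((1 : ℂ →L[ℂ] ℂ).smulRight ((((γ:ℂ)*z+δ)^2)⁻¹)).restrictScalars ℝ) z := by
  have hden : ((γ:ℂ)*z+δ) ≠ 0 := denom_ne α β γ δ h1 hz
  have hc : ((α:ℂ)*δ - β*γ) = 1 := by exact_mod_cast congrArg (fun t : ℝ => (t:ℂ)) h1
  have hN : HasDerivAt (fun z : ℂ => (α:ℂ)*z+β) (α:ℂ) z := by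
    simpa using ((hasDerivAt_id z).const_mul (α:ℂ)).add_const ((β:ℝ):ℂ)
  have hD : HasDerivAt (fun z : ℂ => (γ:ℂ)*z+δ) (γ:ℂ) z := by
    simpa using ((hasDerivAt_id z).const_mul (γ:ℂ)).add_const ((δ:ℝ):ℂ)
  have h : HasDerivAt (mob α β γ δ) ((((γ:ℂ)*z+δ)^2)⁻¹) z := by
    have h' := hN.div hD hden
    have e : ((α:ℂ) * ((γ:ℂ) * z + δ) - ((α:ℂ) * z + β) * γ) = 1 := by linear_combination hc
    rw [e, one_div] at h'
    exact h' 
  exact h.hasFDerivAt.restrictScalars ℝ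

lemma mob_cov (h1 : α*δ - β*γ = 1) (G : ℂ → ℝ) :
    ∫ z in {z : ℂ | 0 < z.im}, G z =
      ∫ z in {z : ℂ | 0 < z.im},
        ((Complex.normSq ((γ:ℂ)*z+δ))^2)⁻¹ * G (mob α β γ δ z) := by
  have hs : MeasurableSet {z : ℂ | 0 < z.im} :=
    measurableSet_lt measurable_const Complex.measurable_im
  have hcov := integral_image_eq_integral_abs_det_fderiv_smul volume hs
    (fun z hz => ((mob_hasFDeriv α β γ δ h1 hz).hasFDerivWithinAt)) (mob_injOn α β γ δ h1) G
  rw [mob_image α β γ δ h1] at hcov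
  rw [hcov]
  apply setIntegral_congr_fun hs
  intro z hz
  have hden : ((γ:ℂ)*z+δ) ≠ 0 := denom_ne α β γ δ h1 hz
  dsimp only
  rw [det_restrict_aux]
  rw [smul_eq_mul]
  rw [map_inv₀, map_pow]
  congr 1
  exact abs_of_nonneg (by positivity)

end Mob

lemma exp_arg_key (a b c α β γ δ x y : ℝ) (h1 : α*δ-β*γ = 1) (hy : y ≠ 0)
    (hn : (γ*x+δ)^2+(γ*y)^2 ≠ 0) :
    (a*((((α*x+β)*(γ*x+δ)+α*γ*y^2)/((γ*x+δ)^2+(γ*y)^2))^2+(y/((γ*x+δ)^2+(γ*y)^2))^2)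
        + 2*b*(((α*x+β)*(γ*x+δ)+α*γ*y^2)/((γ*x+δ)^2+(γ*y)^2)) + c) / (y/((γ*x+δ)^2+(γ*y)^2))
      = ((a*α^2+2*b*α*γ+c*γ^2)*(x^2+y^2)+2*(a*α*β+b*(α*δ+β*γ)+c*γ*δ)*x
          +(a*β^2+2*b*β*δ+c*δ^2))/y := by
  set n := (γ*x+δ)^2+(γ*y)^2 with hn_def
  set R := (α*x+β)*(γ*x+δ)+α*γ*y^2 with hR_def
  have key : a*(R^2+y^2) + 2*b*R*n + c*n^2
      = ((a*α^2+2*b*α*γ+c*γ^2)*(x^2+y^2)+2*(a*α*β+b*(α*δ+β*γ)+c*γ*δ)*x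
          +(a*β^2+2*b*β*δ+c*δ^2))*n := by
    rw [hn_def, hR_def]
    linear_combination (-a*y^2*(α*δ-β*γ+1))*h1
  have hX : a*((R/n)^2+(y/n)^2) + 2*b*(R/n) + c
      = (a*(R^2+y^2)+2*b*R*n+c*n^2)/n^2 := by field_simp
  rw [hX]
  rw [div_div_div_eq]
  rw [div_eq_div_iff (by positivity) hy]
  linear_combination (n*y)*key

/-- The Poincaré density on the upper half-plane, as a density on `ℝ × ℝ`
(vanishing for `y ≤ 0`), indexed by a 2×2 symmetric positive-definite matrix. -/
noncomputable def poincareDensity (θ : Matrix (Fin 2) (Fin 2) ℝ) (z : ℝ × ℝ) : ℝ :=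
  if 0 < z.2 then
    Real.sqrt θ.det * Real.exp (2 * Real.sqrt θ.det) / Real.pi *
      Real.exp (-(θ 0 0 * (z.1 ^ 2 + z.2 ^ 2) + 2 * θ 0 1 * z.1 + θ 1 1) / z.2) / z.2 ^ 2
  else 0

/-- The `f`-divergence between two densities on the upper half-plane. -/
noncomputable def fDivH (f : ℝ → ℝ) (p q : ℝ × ℝ → ℝ) : ℝ :=
  ∫ z in {w : ℝ × ℝ | 0 < w.2}, p z * f (q z / p z)

lemma mob_re_eq (α β γ δ : ℝ) {z : ℂ} :
    (mob α β γ δ z).re = ((α*z.re+β)*(γ*z.re+δ)+α*γ*z.im^2)/((γ*z.re+δ)^2+(γ*z.im)^2) := by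
  rw [mob, Complex.div_re]
  simp only [Complex.add_im, Complex.add_re, Complex.mul_im, Complex.mul_re,
    Complex.ofReal_re, Complex.ofReal_im, Complex.normSq_apply]
  ring_nf

lemma normSq_denom (γ δ : ℝ) (z : ℂ) :
    Complex.normSq ((γ:ℂ)*z+δ) = (γ*z.re+δ)^2+(γ*z.im)^2 := by
  simp only [Complex.normSq_apply, Complex.add_im, Complex.add_re, Complex.mul_im,
    Complex.mul_re, Complex.ofReal_re, Complex.ofReal_im]
  ring

lemma dens_transfer (θ θ' : Matrix (Fin 2) (Fin 2) ℝ) (α β γ δ : ℝ)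
    (h1 : α*δ - β*γ = 1)
    (hA : θ 0 0 * α^2 + 2 * θ 0 1 * α * γ + θ 1 1 * γ^2 = θ' 0 0)
    (hB : θ 0 0 * α * β + θ 0 1 * (α*δ+β*γ) + θ 1 1 * γ * δ = θ' 0 1)
    (hC : θ 0 0 * β^2 + 2 * θ 0 1 * β * δ + θ 1 1 * δ^2 = θ' 1 1)
    (hdet : θ.det = θ'.det)
    {z : ℂ} (hz : 0 < z.im) :
    ((Complex.normSq ((γ:ℂ)*z+δ))^2)⁻¹ *
        poincareDensity θ ((mob α β γ δ z).re, (mob α β γ δ z).im)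
      = poincareDensity θ' (z.re, z.im) := by
  have hnsq : 0 < Complex.normSq ((γ:ℂ)*z+δ) :=
    Complex.normSq_pos.mpr (denom_ne α β γ δ h1 hz)
  have him : (mob α β γ δ z).im = z.im / Complex.normSq ((γ:ℂ)*z+δ) :=
    mob_im α β γ δ h1 hz
  have hwim : 0 < (mob α β γ δ z).im := by rw [him]; exact div_pos hz hnsq
  rw [poincareDensity, poincareDensity]
  rw [if_pos (show (0:ℝ) < ((mob α β γ δ z).re, (mob α β γ δ z).im).2 from hwim),
    if_pos (show (0:ℝ) < (z.re, z.im).2 from hz)]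
  simp only
  have hexp : -(θ 0 0 * ((mob α β γ δ z).re ^ 2 + (mob α β γ δ z).im ^ 2)
        + 2 * θ 0 1 * (mob α β γ δ z).re + θ 1 1) / (mob α β γ δ z).im
      = -(θ' 0 0 * (z.re ^ 2 + z.im ^ 2) + 2 * θ' 0 1 * z.re + θ' 1 1) / z.im := by
    rw [← hA, ← hB, ← hC]
    rw [mob_re_eq, him, normSq_denom]
    rw [neg_div, neg_div, neg_inj]
    exact exp_arg_key (θ 0 0) (θ 0 1) (θ 1 1) α β γ δ z.re z.im h1 (ne_of_gt hz)
      (by rw [← normSq_denom]; exact ne_of_gt hnsq)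
  rw [hexp, hdet]
  rw [him, normSq_denom]
  set n := (γ*z.re+δ)^2+(γ*z.im)^2 with hn_def
  have hn : n ≠ 0 := by rw [hn_def, ← normSq_denom]; exact ne_of_gt hnsq
  field_simp

lemma integral_halfplane_complex (F : ℝ × ℝ → ℝ) :
    (∫ p in {w : ℝ × ℝ | 0 < w.2}, F p) = ∫ z in {z : ℂ | 0 < z.im}, F (z.re, z.im) := by
  have h := Complex.volume_preserving_equiv_real_prod.setIntegral_preimage_emb
    Complex.measurableEquivRealProd.measurableEmbedding F {w : ℝ × ℝ | 0 < w.2}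
  have hpre : Complex.measurableEquivRealProd ⁻¹' {w : ℝ × ℝ | 0 < w.2}
      = {z : ℂ | 0 < z.im} := by
    ext z; simp [Complex.measurableEquivRealProd_apply]
  rw [hpre] at h
  rw [← h]
  simp_rw [Complex.measurableEquivRealProd_apply]

/-- on each leaf of the determinant foliation (matrices of equal
determinant), every f-divergence between Poincaré distributions is symmetric. -/
theorem fDiv_poincare_symmetric_on_leaf
    (θ₁ θ₂ : Matrix (Fin 2) (Fin 2) ℝ) (h₁ : θ₁.PosDef) (h₂ : θ₂.PosDef)
    (hdet : θ₁.det = θ₂.det)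
    (f : ℝ → ℝ) (hf : ConvexOn ℝ (Set.Ioi 0) f) (hf1 : f 1 = 0) :
    fDivH f (poincareDensity θ₁) (poincareDensity θ₂) =
      fDivH f (poincareDensity θ₂) (poincareDensity θ₁) := by
  have hs1 : θ₁ 1 0 = θ₁ 0 1 := by simpa using (h₁.1.apply 0 1)
  have hs2 : θ₂ 1 0 = θ₂ 0 1 := by simpa using (h₂.1.apply 0 1)
  set a1 := θ₁ 0 0 with ha1; set b1 := θ₁ 0 1 with hb1; set c1 := θ₁ 1 1 with hc1
  set a2 := θ₂ 0 0 with ha2; set b2 := θ₂ 0 1 with hb2; set c2 := θ₂ 1 1 with hc2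
  have hdet1 : θ₁.det = a1*c1 - b1^2 := by rw [Matrix.det_fin_two, hs1]; ring
  have hdet2 : θ₂.det = a2*c2 - b2^2 := by rw [Matrix.det_fin_two, hs2]; ring
  have hd : a1*c1 - b1^2 = a2*c2 - b2^2 := by rw [← hdet1, ← hdet2, hdet]
  have hS : (θ₁ + θ₂).PosDef := h₁.add h₂
  have hD : (θ₁ + θ₂).det = (a1+a2)*(c1+c2) - (b1+b2)^2 := by
    rw [Matrix.det_fin_two]
    simp only [Matrix.add_apply, hs1, hs2]
    ring
  have hDpos : (0:ℝ) < (a1+a2)*(c1+c2) - (b1+b2)^2 := hD ▸ hS.det_pos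
  set D := (a1+a2)*(c1+c2) - (b1+b2)^2 with hDdef
  set r := Real.sqrt D with hrdef
  have hrpos : 0 < r := Real.sqrt_pos.mpr hDpos
  have hr : r ≠ 0 := ne_of_gt hrpos
  have hr2 : r^2 = D := Real.sq_sqrt hDpos.le
  set α := -(b1+b2)/r with hα
  set β := -(c1+c2)/r with hβ
  set γ := (a1+a2)/r with hγ
  set δ := (b1+b2)/r with hδ
  have h1 : α*δ - β*γ = 1 := by
    have e : α*δ - β*γ = D/r^2 := by rw [hα, hβ, hγ, hδ, hDdef]; field_simp; ring
    rw [e, hr2]; exact div_self (ne_of_gt hDpos)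
  have hA12 : a1*α^2 + 2*b1*α*γ + c1*γ^2 = a2 := by
    have e : a1*α^2 + 2*b1*α*γ + c1*γ^2
        = (a1*(b1+b2)^2 - 2*b1*(b1+b2)*(a1+a2) + c1*(a1+a2)^2)/r^2 := by
      rw [hα, hγ]; field_simp; ring
    rw [e, hr2, div_eq_iff (ne_of_gt hDpos), hDdef]
    linear_combination (a1+a2)*hd
  have hB12 : a1*α*β + b1*(α*δ+β*γ) + c1*γ*δ = b2 := by
    have e : a1*α*β + b1*(α*δ+β*γ) + c1*γ*δ
        = (a1*(b1+b2)*(c1+c2) - b1*((b1+b2)^2+(a1+a2)*(c1+c2)) + c1*(a1+a2)*(b1+b2))/r^2 := by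
      rw [hα, hβ, hγ, hδ]; field_simp; ring
    rw [e, hr2, div_eq_iff (ne_of_gt hDpos), hDdef]
    linear_combination (b1+b2)*hd
  have hC12 : a1*β^2 + 2*b1*β*δ + c1*δ^2 = c2 := by
    have e : a1*β^2 + 2*b1*β*δ + c1*δ^2
        = (a1*(c1+c2)^2 - 2*b1*(c1+c2)*(b1+b2) + c1*(b1+b2)^2)/r^2 := by
      rw [hβ, hδ]; field_simp; ring
    rw [e, hr2, div_eq_iff (ne_of_gt hDpos), hDdef]
    linear_combination (c1+c2)*hd
  have hA21 : a2*α^2 + 2*b2*α*γ + c2*γ^2 = a1 := by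
    have e : a2*α^2 + 2*b2*α*γ + c2*γ^2
        = (a2*(b1+b2)^2 - 2*b2*(b1+b2)*(a1+a2) + c2*(a1+a2)^2)/r^2 := by
      rw [hα, hγ]; field_simp; ring
    rw [e, hr2, div_eq_iff (ne_of_gt hDpos), hDdef]
    linear_combination -(a1+a2)*hd
  have hB21 : a2*α*β + b2*(α*δ+β*γ) + c2*γ*δ = b1 := by
    have e : a2*α*β + b2*(α*δ+β*γ) + c2*γ*δ
        = (a2*(b1+b2)*(c1+c2) - b2*((b1+b2)^2+(a1+a2)*(c1+c2)) + c2*(a1+a2)*(b1+b2))/r^2 := by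
      rw [hα, hβ, hγ, hδ]; field_simp; ring
    rw [e, hr2, div_eq_iff (ne_of_gt hDpos), hDdef]
    linear_combination -(b1+b2)*hd
  have hC21 : a2*β^2 + 2*b2*β*δ + c2*δ^2 = c1 := by
    have e : a2*β^2 + 2*b2*β*δ + c2*δ^2
        = (a2*(c1+c2)^2 - 2*b2*(c1+c2)*(b1+b2) + c2*(b1+b2)^2)/r^2 := by
      rw [hβ, hδ]; field_simp; ring
    rw [e, hr2, div_eq_iff (ne_of_gt hDpos), hDdef]
    linear_combination -(c1+c2)*hd
  have hsU : MeasurableSet {z : ℂ | 0 < z.im} :=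
    measurableSet_lt measurable_const Complex.measurable_im
  rw [fDivH, fDivH, integral_halfplane_complex, integral_halfplane_complex]
  rw [mob_cov α β γ δ h1 (fun z => poincareDensity θ₂ (z.re, z.im) *
        f (poincareDensity θ₁ (z.re, z.im) / poincareDensity θ₂ (z.re, z.im)))]
  apply setIntegral_congr_fun hsU
  intro z hz
  have hz' : 0 < z.im := hz
  have T21 := dens_transfer θ₂ θ₁ α β γ δ h1 hA21 hB21 hC21 hdet.symm hz'
  have T12 := dens_transfer θ₁ θ₂ α β γ δ h1 hA12 hB12 hC12 hdet hz'
  have hns0 : ((Complex.normSq ((γ:ℂ)*z+δ))^2)⁻¹ ≠ 0 := by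
    have := Complex.normSq_pos.mpr (denom_ne α β γ δ h1 hz')
    positivity
  dsimp only
  have hratio : poincareDensity θ₁ ((mob α β γ δ z).re, (mob α β γ δ z).im)
        / poincareDensity θ₂ ((mob α β γ δ z).re, (mob α β γ δ z).im)
      = poincareDensity θ₂ (z.re, z.im) / poincareDensity θ₁ (z.re, z.im) := by
    rw [← T12, ← T21, mul_div_mul_left _ _ hns0]
  rw [hratio, ← mul_assoc, T21]
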